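/- Let N ≥ 1 and p > 1. Let E := Matrix (Fin N) (Fin N) ℝ be equipped with the Frobenius inner product ⟪ξ, η⟫ = tr(ξᵀη), and for ξ ∈ E write ξˢ := (ξ + ξᵀ)/2. Let A : E →L[ℝ] E be a continuous linear map that is symmetric (⟪Aξ, η⟫ = ⟪ξ, Aη⟫ for all ξ, η ∈ E) and satisfies ⟪Aζ, ζ⟫ ≥ 0 for every symmetric matrix ζ. Define F(ξ) := ⟪Aξˢ, ξˢ⟫^{p/2}. Then for all ξ, η ∈ E, |F(ξ) − F(η)| ≤ p · 2^{(p−1)²/p} · (F(ξ) + F(η))^{(p−1)/p} · ‖A‖^{1/2} · ‖ξ − η‖, where ‖A‖ is the operator norm of A and ‖·‖ the Frobenius norm. -/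

import Mathlib

open Matrix

attribute [local instance] Matrix.frobeniusNormedAddCommGroup Matrix.frobeniusNormedSpace

/-- The Frobenius inner product of two real square matrices: `⟪ξ, η⟫ = tr(ξᵀη)`. -/
noncomputable def finner {N : ℕ} (ξ η : Matrix (Fin N) (Fin N) ℝ) : ℝ :=
  (ξᵀ * η).trace

/-- The symmetric part `ξˢ = (ξ + ξᵀ)/2` of a square matrix. -/
noncomputable def symPart {N : ℕ} (ξ : Matrix (Fin N) (Fin N) ℝ) :
    Matrix (Fin N) (Fin N) ℝ :=
  (1 / 2 : ℝ) • (ξ + ξᵀ)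

/-- The density `F(ξ) = ⟪Aξˢ, ξˢ⟫^(p/2)` of Example 1. -/
noncomputable def Fdens {N : ℕ} (p : ℝ)
    (A : Matrix (Fin N) (Fin N) ℝ →L[ℝ] Matrix (Fin N) (Fin N) ℝ)
    (ξ : Matrix (Fin N) (Fin N) ℝ) : ℝ :=
  finner (A (symPart ξ)) (symPart ξ) ^ (p / 2)

namespace Example1Aux

variable {N : ℕ}

lemma finner_eq_sum (x y : Matrix (Fin N) (Fin N) ℝ) :
    finner x y = ∑ i, ∑ j, x j i * y j i := by
  simp [finner, Matrix.trace, Matrix.mul_apply, Matrix.diag, Matrix.transpose_apply]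

lemma finner_eq_sum' (x y : Matrix (Fin N) (Fin N) ℝ) :
    finner x y = ∑ q ∈ Finset.univ ×ˢ Finset.univ, x q.2 q.1 * y q.2 q.1 := by
  rw [finner_eq_sum, ← Finset.sum_product']

lemma finner_comm (x y : Matrix (Fin N) (Fin N) ℝ) : finner x y = finner y x := by
  simp [finner_eq_sum, mul_comm]

lemma finner_add_left (x y z : Matrix (Fin N) (Fin N) ℝ) :
    finner (x + y) z = finner x z + finner y z := by
  simp [finner_eq_sum, Matrix.add_apply, add_mul, Finset.sum_add_distrib]

lemma finner_add_right (x y z : Matrix (Fin N) (Fin N) ℝ) :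
    finner x (y + z) = finner x y + finner x z := by
  simp [finner_eq_sum, Matrix.add_apply, mul_add, Finset.sum_add_distrib]

lemma finner_smul_left (t : ℝ) (x y : Matrix (Fin N) (Fin N) ℝ) :
    finner (t • x) y = t * finner x y := by
  simp [finner_eq_sum, Matrix.smul_apply, Finset.mul_sum, mul_assoc]

lemma finner_smul_right (t : ℝ) (x y : Matrix (Fin N) (Fin N) ℝ) :
    finner x (t • y) = t * finner x y := by
  rw [finner_comm, finner_smul_left, finner_comm]

lemma finner_zero_left (y : Matrix (Fin N) (Fin N) ℝ) : finner 0 y = 0 := by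
  simp [finner_eq_sum]

lemma finner_self_nonneg (x : Matrix (Fin N) (Fin N) ℝ) : 0 ≤ finner x x := by
  rw [finner_eq_sum]
  exact Finset.sum_nonneg fun i _ => Finset.sum_nonneg fun j _ => mul_self_nonneg _

lemma norm_eq_sqrt_finner (x : Matrix (Fin N) (Fin N) ℝ) :
    ‖x‖ = Real.sqrt (finner x x) := by
  rw [Matrix.frobenius_norm_def, ← Real.sqrt_eq_rpow, finner_eq_sum]
  congr 1
  rw [Finset.sum_comm]
  refine Finset.sum_congr rfl fun i _ => Finset.sum_congr rfl fun j _ => ?_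
  rw [Real.rpow_two, Real.norm_eq_abs, sq_abs, sq]

lemma finner_le_norm_mul_norm (x y : Matrix (Fin N) (Fin N) ℝ) :
    finner x y ≤ ‖x‖ * ‖y‖ := by
  rw [norm_eq_sqrt_finner, norm_eq_sqrt_finner,
    ← Real.sqrt_mul (finner_self_nonneg x)]
  have h3 : (finner x y) ^ 2 ≤ finner x x * finner y y := by
    rw [finner_eq_sum' x y, finner_eq_sum' x x, finner_eq_sum' y y]
    have := Finset.sum_mul_sq_le_sq_mul_sq
      ((Finset.univ : Finset (Fin N)) ×ˢ (Finset.univ : Finset (Fin N)))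
      (fun q => x q.2 q.1) (fun q => y q.2 q.1)
    simpa [sq] using this
  calc finner x y ≤ |finner x y| := le_abs_self _
    _ = Real.sqrt ((finner x y) ^ 2) := (Real.sqrt_sq_eq_abs _).symm
    _ ≤ Real.sqrt (finner x x * finner y y) := Real.sqrt_le_sqrt h3

lemma symPart_transpose (x : Matrix (Fin N) (Fin N) ℝ) : (symPart x)ᵀ = symPart x := by
  simp [symPart, Matrix.transpose_add, add_comm]

lemma symPart_zero : symPart (0 : Matrix (Fin N) (Fin N) ℝ) = 0 := by
  simp [symPart]

lemma symPart_add (x y : Matrix (Fin N) (Fin N) ℝ) :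
    symPart (x + y) = symPart x + symPart y := by
  simp only [symPart, Matrix.transpose_add, smul_add]
  abel

lemma symPart_smul (t : ℝ) (x : Matrix (Fin N) (Fin N) ℝ) :
    symPart (t • x) = t • symPart x := by
  ext i j
  simp [symPart, Matrix.smul_apply, Matrix.add_apply, Matrix.transpose_apply]
  ring

lemma norm_symPart_le (x : Matrix (Fin N) (Fin N) ℝ) : ‖symPart x‖ ≤ ‖x‖ := by
  rw [symPart]
  calc ‖(1 / 2 : ℝ) • (x + xᵀ)‖ = (1/2) * ‖x + xᵀ‖ := by
        rw [norm_smul]; norm_num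
    _ ≤ (1/2) * (‖x‖ + ‖xᵀ‖) := by
        have := norm_add_le x xᵀ
        nlinarith
    _ = ‖x‖ := by rw [Matrix.frobenius_norm_transpose]; ring

/-- Bernoulli-based mean value inequality for rpow. -/
lemma rpow_sub_rpow_le {a b p : ℝ} (hb : 0 ≤ b) (hba : b ≤ a) (hp : 1 ≤ p) :
    a ^ p - b ^ p ≤ p * a ^ (p - 1) * (a - b) := by
  rcases eq_or_lt_of_le (hb.trans hba) with h0 | ha
  · have hb0 : b = 0 := le_antisymm (hba.trans_eq h0.symm) hb
    simp [← h0, hb0, Real.zero_rpow (show p ≠ 0 by positivity)]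
  · have ha' : a ≠ 0 := ne_of_gt ha
    have hs : (-1 : ℝ) ≤ b / a - 1 := by
      have : 0 ≤ b / a := div_nonneg hb ha.le
      linarith
    have hber := one_add_mul_self_le_rpow_one_add hs hp
    have h1s : (1 : ℝ) + (b / a - 1) = b / a := by ring
    rw [h1s, Real.div_rpow hb ha.le] at hber
    have hap : (0:ℝ) < a ^ p := Real.rpow_pos_of_pos ha p
    have key := mul_le_mul_of_nonneg_right hber hap.le
    rw [div_mul_cancel₀ _ (ne_of_gt hap)] at key
    have hsplit : a ^ p = a * a ^ (p - 1) := by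
      nth_rewrite 2 [← Real.rpow_one a]
      rw [← Real.rpow_add ha]
      congr 1
      ring
    have e : (1 + p * (b / a - 1)) * a ^ p = a ^ p - p * a ^ (p-1) * (a - b) := by
      rw [hsplit]; field_simp; ring
    rw [e] at key
    linarith

lemma abs_rpow_sub_rpow_le {a b p : ℝ} (ha : 0 ≤ a) (hb : 0 ≤ b) (hp : 1 ≤ p) :
    |a ^ p - b ^ p| ≤ p * (max a b) ^ (p - 1) * |a - b| := by
  rcases le_total b a with h | h
  · rw [abs_of_nonneg (sub_nonneg.2 (Real.rpow_le_rpow hb h (by linarith))),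
      abs_of_nonneg (sub_nonneg.2 h), max_eq_left h]
    exact rpow_sub_rpow_le hb h hp
  · rw [abs_sub_comm, abs_of_nonneg (sub_nonneg.2 (Real.rpow_le_rpow ha h (by linarith))),
      abs_sub_comm a b, abs_of_nonneg (sub_nonneg.2 h), max_eq_right h]
    exact rpow_sub_rpow_le ha h hp

lemma max_rpow_le {a b p : ℝ} (ha : 0 ≤ a) (hb : 0 ≤ b) (hp : 1 < p) :
    (max a b) ^ (p - 1) ≤ (a ^ p + b ^ p) ^ ((p - 1) / p) := by
  have hm : 0 ≤ max a b := le_max_of_le_left ha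
  have hppos : (0:ℝ) < p := by linarith
  have h1 : (max a b) ^ (p - 1) = ((max a b) ^ p) ^ ((p - 1) / p) := by
    rw [← Real.rpow_mul hm]
    congr 1
    field_simp
  rw [h1]
  refine Real.rpow_le_rpow (Real.rpow_nonneg hm p) ?_
    (div_nonneg (by linarith) hppos.le)
  rcases max_cases a b with ⟨he, _⟩ | ⟨he, _⟩ <;> rw [he] <;>
    nlinarith [Real.rpow_nonneg ha p, Real.rpow_nonneg hb p]

end Example1Aux

open Example1Aux in
theorem example1_lipschitz_estimate {N : ℕ} (hN : 1 ≤ N) (p : ℝ) (hp : 1 < p)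
    (A : Matrix (Fin N) (Fin N) ℝ →L[ℝ] Matrix (Fin N) (Fin N) ℝ)
    (hAsymm : ∀ ξ η : Matrix (Fin N) (Fin N) ℝ, finner (A ξ) η = finner ξ (A η))
    (hApos : ∀ ζ : Matrix (Fin N) (Fin N) ℝ, ζᵀ = ζ → 0 ≤ finner (A ζ) ζ) :
    ∀ ξ η : Matrix (Fin N) (Fin N) ℝ,
      |Fdens p A ξ - Fdens p A η| ≤
        p * (2 : ℝ) ^ ((p - 1) ^ 2 / p) * (Fdens p A ξ + Fdens p A η) ^ ((p - 1) / p) *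
          (@norm _ ContinuousLinearMap.hasOpNorm A) ^ ((1 : ℝ) / 2) * ‖ξ - η‖ := by
  intro ξ η
  letI : NormedAddCommGroup (Matrix (Fin N) (Fin N) ℝ →L[ℝ] Matrix (Fin N) (Fin N) ℝ) :=
    ContinuousLinearMap.toNormedAddCommGroup
  have hppos : (0:ℝ) < p := by linarith
  set B : Matrix (Fin N) (Fin N) ℝ → Matrix (Fin N) (Fin N) ℝ → ℝ := fun x y => finner (A (symPart x)) (symPart y) with hB
  have hQnn : ∀ x : Matrix (Fin N) (Fin N) ℝ, 0 ≤ B x x := fun x => hApos _ (symPart_transpose x)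
  have hBsymm : ∀ x y : Matrix (Fin N) (Fin N) ℝ, B x y = B y x := by
    intro x y
    simp only [hB]
    rw [hAsymm, finner_comm]
  -- expansion of the quadratic form
  have hexp : ∀ (x y : Matrix (Fin N) (Fin N) ℝ) (t : ℝ),
      B (x + t • y) (x + t • y) = B y y * (t * t) + (2 * B x y) * t + B x x := by
    intro x y t
    simp only [hB, symPart_add, symPart_smul, map_add, ContinuousLinearMap.map_smul,
      finner_add_left, finner_add_right, finner_smul_left, finner_smul_right]
    have h := hBsymm x y
    simp only [hB] at h
    linear_combination (-t) * h
  -- Cauchy-Schwarz for B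
  have hCS : ∀ x y : Matrix (Fin N) (Fin N) ℝ, (B x y) ^ 2 ≤ B x x * B y y := by
    intro x y
    have hd := discrim_le_zero (a := B y y) (b := 2 * B x y) (c := B x x) (fun t => by
      have h0 := hQnn (x + t • y)
      rw [hexp x y t] at h0
      linarith)
    rw [discrim] at hd
    nlinarith [hd]
  set q : Matrix (Fin N) (Fin N) ℝ → ℝ := fun x => Real.sqrt (B x x) with hq
  have hqnn : ∀ x : Matrix (Fin N) (Fin N) ℝ, 0 ≤ q x := fun x => Real.sqrt_nonneg _
  have hqsq : ∀ x : Matrix (Fin N) (Fin N) ℝ, q x ^ 2 = B x x := fun x => Real.sq_sqrt (hQnn x)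
  have hBle : ∀ x y : Matrix (Fin N) (Fin N) ℝ, B x y ≤ q x * q y := by
    intro x y
    calc B x y ≤ |B x y| := le_abs_self _
      _ = Real.sqrt ((B x y) ^ 2) := (Real.sqrt_sq_eq_abs _).symm
      _ ≤ Real.sqrt (B x x * B y y) := Real.sqrt_le_sqrt (hCS x y)
      _ = q x * q y := Real.sqrt_mul (hQnn x) _
  -- triangle inequality for q
  have htri : ∀ x y : Matrix (Fin N) (Fin N) ℝ, q (x + y) ≤ q x + q y := by
    intro x y
    have hx1 : x + y = x + (1:ℝ) • y := by rw [one_smul]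
    have hQ : B (x + y) (x + y) ≤ (q x + q y) ^ 2 := by
      rw [hx1, hexp x y 1]
      have := hBle x y
      nlinarith [hqsq x, hqsq y]
    calc q (x + y) = Real.sqrt (B (x+y) (x+y)) := rfl
      _ ≤ Real.sqrt ((q x + q y)^2) := Real.sqrt_le_sqrt hQ
      _ = q x + q y := Real.sqrt_sq (by positivity)
  have hqneg : ∀ x : Matrix (Fin N) (Fin N) ℝ, q (-x) = q x := by
    intro x
    have h0 : (0 : Matrix (Fin N) (Fin N) ℝ) + (-1:ℝ) • x = -x := by simp
    have := hexp 0 x (-1)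
    rw [h0] at this
    have hB0 : B 0 x = 0 := by
      simp only [hB, symPart_zero, map_zero, finner_zero_left]
    have hB00 : B 0 0 = 0 := by
      simp only [hB, symPart_zero, map_zero, finner_zero_left]
    simp only [hq]
    rw [this, hB0, hB00]
    norm_num
  -- reverse triangle
  have hrev : |q ξ - q η| ≤ q (ξ - η) := by
    rw [abs_sub_le_iff]
    constructor
    · have := htri (ξ - η) η
      rw [sub_add_cancel] at this
      linarith
    · have := htri (η - ξ) ξ
      rw [sub_add_cancel] at this
      have hneg : q (η - ξ) = q (ξ - η) := by
        rw [← hqneg (ξ - η), neg_sub]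
      linarith
  -- bound q by the operator norm
  have hqle : ∀ z : Matrix (Fin N) (Fin N) ℝ, q z ≤ Real.sqrt ‖A‖ * ‖z‖ := by
    intro z
    have h1 : B z z ≤ ‖A‖ * ‖z‖ ^ 2 := by
      have hc : finner (A (symPart z)) (symPart z) ≤ ‖A (symPart z)‖ * ‖symPart z‖ :=
        finner_le_norm_mul_norm _ _
      have hop : ‖A (symPart z)‖ ≤ ‖A‖ * ‖symPart z‖ := A.le_opNorm _
      have hsp : ‖symPart z‖ ≤ ‖z‖ := norm_symPart_le z
      have hA0 : (0:ℝ) ≤ ‖A‖ := norm_nonneg _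
      have h0 : (0:ℝ) ≤ ‖symPart z‖ := norm_nonneg _
      simp only [hB]
      calc finner (A (symPart z)) (symPart z) ≤ ‖A (symPart z)‖ * ‖symPart z‖ := hc
        _ ≤ (‖A‖ * ‖symPart z‖) * ‖symPart z‖ := mul_le_mul_of_nonneg_right hop h0
        _ = ‖A‖ * (‖symPart z‖ * ‖symPart z‖) := by ring
        _ ≤ ‖A‖ * (‖z‖ * ‖z‖) :=
            mul_le_mul_of_nonneg_left (mul_le_mul hsp hsp h0 (norm_nonneg z)) hA0
        _ = ‖A‖ * ‖z‖ ^ 2 := by ring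
    calc q z = Real.sqrt (B z z) := rfl
      _ ≤ Real.sqrt (‖A‖ * ‖z‖^2) := Real.sqrt_le_sqrt h1
      _ = Real.sqrt ‖A‖ * ‖z‖ := by
          rw [Real.sqrt_mul (norm_nonneg A), Real.sqrt_sq (norm_nonneg z)]
  -- Fdens in terms of q
  have hF : ∀ x : Matrix (Fin N) (Fin N) ℝ, Fdens p A x = q x ^ p := by
    intro x
    have : q x ^ p = (B x x ^ ((1:ℝ)/2)) ^ p := by
      simp only [hq]
      rw [Real.sqrt_eq_rpow]
    rw [this, ← Real.rpow_mul (hQnn x)]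
    have : (1:ℝ)/2 * p = p/2 := by ring
    rw [this]
    rfl
  set a := q ξ
  set b := q η
  have hFξ : Fdens p A ξ = a ^ p := hF ξ
  have hFη : Fdens p A η = b ^ p := hF η
  have key : |Fdens p A ξ - Fdens p A η| ≤
      p * (Fdens p A ξ + Fdens p A η) ^ ((p-1)/p) * (Real.sqrt ‖A‖ * ‖ξ - η‖) := by
    rw [hFξ, hFη]
    calc |a ^ p - b ^ p| ≤ p * (max a b) ^ (p - 1) * |a - b| :=
          abs_rpow_sub_rpow_le (hqnn ξ) (hqnn η) hp.le
      _ ≤ p * (a ^ p + b ^ p) ^ ((p-1)/p) * (Real.sqrt ‖A‖ * ‖ξ - η‖) := by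
          have h1 : (max a b) ^ (p - 1) ≤ (a ^ p + b ^ p) ^ ((p-1)/p) :=
            max_rpow_le (hqnn ξ) (hqnn η) hp
          have h2 : |a - b| ≤ Real.sqrt ‖A‖ * ‖ξ - η‖ := hrev.trans (hqle _)
          have hmn : (0:ℝ) ≤ (max a b) ^ (p - 1) := Real.rpow_nonneg (le_max_of_le_left (hqnn ξ)) _
          have hsn : (0:ℝ) ≤ (a ^ p + b ^ p) ^ ((p-1)/p) := Real.rpow_nonneg
            (by positivity) _
          have habs : (0:ℝ) ≤ |a - b| := abs_nonneg _
          nlinarith [mul_le_mul h1 h2 habs hsn]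
  have h2c : (1:ℝ) ≤ (2:ℝ) ^ ((p - 1) ^ 2 / p) := by
    calc (1:ℝ) = (2:ℝ) ^ (0:ℝ) := (Real.rpow_zero 2).symm
      _ ≤ (2:ℝ) ^ ((p - 1) ^ 2 / p) :=
          Real.rpow_le_rpow_of_exponent_le (by norm_num)
            (div_nonneg (sq_nonneg _) hppos.le)
  have hsqrtA : Real.sqrt ‖A‖ = ‖A‖ ^ ((1:ℝ)/2) := Real.sqrt_eq_rpow _
  have hRHSnn : 0 ≤ p * (Fdens p A ξ + Fdens p A η) ^ ((p-1)/p) * (Real.sqrt ‖A‖ * ‖ξ - η‖) := by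
    have : 0 ≤ (Fdens p A ξ + Fdens p A η) ^ ((p-1)/p) := Real.rpow_nonneg (by
      rw [hFξ, hFη]; positivity) _
    positivity
  calc |Fdens p A ξ - Fdens p A η|
      ≤ p * (Fdens p A ξ + Fdens p A η) ^ ((p-1)/p) * (Real.sqrt ‖A‖ * ‖ξ - η‖) := key
    _ ≤ (2:ℝ) ^ ((p - 1) ^ 2 / p) *
        (p * (Fdens p A ξ + Fdens p A η) ^ ((p-1)/p) * (Real.sqrt ‖A‖ * ‖ξ - η‖)) :=
          le_mul_of_one_le_left hRHSnn h2c
    _ = p * (2 : ℝ) ^ ((p - 1) ^ 2 / p) * (Fdens p A ξ + Fdens p A η) ^ ((p - 1) / p) *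
          ‖A‖ ^ ((1 : ℝ) / 2) * ‖ξ - η‖ := by
        rw [← hsqrtA]; ring
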